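/- arXiv:2005.02275 — 4 statements merged into one kernel-verified Lean document; each statement's English description precedes it below -/
import Mathlib

section
/- Let T(x) = √(1-2x) and H₀(x) = 1/40 − T(x)²/12 + T(x)⁴/8 − T(x)⁵/15 for x < 1/2. Then for every integer n ≥ 3, the n-th derivative of H₀ is H₀^{(n)}(x) = (2n-7)!! / T(x)^{2n-5}. In particular H₀^{(n)}(0) = (2n-7)!! for n ≥ 3. -/
noncomputable def H0 : ℝ → ℝ := fun x =>
  1/40 - (Real.sqrt (1 - 2*x))^2/12 + (Real.sqrt (1 - 2*x))^4/8
    - (Real.sqrt (1 - 2*x))^5/15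

noncomputable def h1 : ℝ → ℝ := fun x =>
  1/6 - (1 - 2*x)/2 + (1 - 2*x) * Real.sqrt (1 - 2*x)/3

noncomputable def h2 : ℝ → ℝ := fun x => 1 - Real.sqrt (1 - 2*x)

lemma sqrt_pos' {x : ℝ} (hx : x < 1/2) : 0 < Real.sqrt (1 - 2*x) :=
  Real.sqrt_pos.mpr (by linarith)

lemma sq_sqrt' {x : ℝ} (hx : x < 1/2) : Real.sqrt (1 - 2*x) ^ 2 = 1 - 2*x :=
  Real.sq_sqrt (by linarith)

lemma hasDerivAt_s {x : ℝ} (hx : x < 1/2) :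
    HasDerivAt (fun y => Real.sqrt (1 - 2*y)) (-1 / Real.sqrt (1 - 2*x)) x := by
  have h1 : HasDerivAt (fun y : ℝ => 1 - 2*y) (-2) x := by
    simpa using ((hasDerivAt_id x).const_mul (2:ℝ)).const_sub 1
  have h2 := (Real.hasDerivAt_sqrt (by linarith : (1:ℝ) - 2*x ≠ 0)).comp x h1
  refine h2.congr_deriv (Eq.symm ?_)
  have hs := sqrt_pos' hx
  field_simp

lemma d1 {x : ℝ} (hx : x < 1/2) : HasDerivAt H0 (h1 x) x := by
  have hs := hasDerivAt_s hx
  have hs0 := (sqrt_pos' hx).ne'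
  have h := ((((hs.pow 2).div_const 12).const_sub (1/40)).add ((hs.pow 4).div_const 8)).sub
    ((hs.pow 5).div_const 15)
  refine h.congr_deriv (Eq.symm ?_)
  have hsq : (1:ℝ) - 2*x = Real.sqrt (1 - 2*x) ^ 2 := (sq_sqrt' hx).symm
  unfold h1
  set s := Real.sqrt (1 - 2*x) with hdef
  rw [hsq]
  field_simp
  ring

lemma d2 {x : ℝ} (hx : x < 1/2) : HasDerivAt h1 (h2 x) x := by
  have hs := hasDerivAt_s hx
  have hs0 := (sqrt_pos' hx).ne'
  have hlin : HasDerivAt (fun y : ℝ => 1 - 2*y) (-2) x := by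
    simpa using ((hasDerivAt_id x).const_mul (2:ℝ)).const_sub 1
  have h := ((hlin.div_const 2).const_sub (1/6)).add ((hlin.mul hs).div_const 3)
  refine h.congr_deriv (Eq.symm ?_)
  have hsq : (1:ℝ) - 2*x = Real.sqrt (1 - 2*x) ^ 2 := (sq_sqrt' hx).symm
  unfold h2
  set s := Real.sqrt (1 - 2*x) with hdef
  rw [hsq]
  field_simp
  ring

lemma d3 {x : ℝ} (hx : x < 1/2) :
    HasDerivAt h2 (1 / Real.sqrt (1 - 2*x)) x := by
  have hs := hasDerivAt_s hx
  have h := hs.const_sub 1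
  refine h.congr_deriv (Eq.symm ?_)
  field_simp

lemma dfact_odd (k : ℕ) :
    (Nat.doubleFactorial (2*k+1) : ℝ) = (2*k+1) * Nat.doubleFactorial (2*k-1) := by
  cases k with
  | zero => simp [Nat.doubleFactorial]
  | succ k =>
    have : 2*(k+1)+1 = (2*k+1)+2 := by omega
    rw [this, Nat.doubleFactorial]
    have : 2*(k+1)-1 = 2*k+1 := by omega
    rw [this]
    push_cast
    ring

lemma step (k : ℕ) {x : ℝ} (hx : x < 1/2) :
    HasDerivAt (fun y => (Nat.doubleFactorial (2*k-1) : ℝ) / (Real.sqrt (1-2*y))^(2*k+1))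
      ((Nat.doubleFactorial (2*k+1) : ℝ) / (Real.sqrt (1-2*x))^(2*k+3)) x := by
  have hs := hasDerivAt_s hx
  have hs0 := (sqrt_pos' hx).ne'
  have h := (hasDerivAt_const x ((Nat.doubleFactorial (2*k-1) : ℝ))).div (hs.pow (2*k+1))
    (pow_ne_zero _ hs0)
  refine h.congr_deriv (Eq.symm ?_)
  rw [dfact_odd k]
  simp only [Pi.pow_apply]
  set s := Real.sqrt (1 - 2*x) with hdef
  have h1 : 2*k+1-1 = 2*k := by omega
  rw [h1]
  field_simp
  push_cast
  ring

lemma D1 {y : ℝ} (hy : y < 1/2) : deriv H0 y = h1 y := (d1 hy).deriv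

lemma D2 {y : ℝ} (hy : y < 1/2) : deriv (deriv H0) y = h2 y := by
  have h : deriv H0 =ᶠ[nhds y] h1 := by
    filter_upwards [Iio_mem_nhds hy] with z hz using D1 hz
  rw [h.deriv_eq]
  exact (d2 hy).deriv

lemma D3 {y : ℝ} (hy : y < 1/2) :
    deriv (deriv (deriv H0)) y = 1 / Real.sqrt (1 - 2*y) := by
  have h : deriv (deriv H0) =ᶠ[nhds y] h2 := by
    filter_upwards [Iio_mem_nhds hy] with z hz using D2 hz
  rw [h.deriv_eq]
  exact (d3 hy).deriv

theorem stmt2 (n : ℕ) (hn : 3 ≤ n) :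
    (∀ x : ℝ, x < 1/2 →
      iteratedDeriv n H0 x
        = (Nat.doubleFactorial (2*n - 7) : ℝ) / (Real.sqrt (1 - 2*x))^(2*n - 5)) ∧
    iteratedDeriv n H0 0 = (Nat.doubleFactorial (2*n - 7) : ℝ) := by
  have key : ∀ x : ℝ, x < 1/2 →
      iteratedDeriv n H0 x
        = (Nat.doubleFactorial (2*n - 7) : ℝ) / (Real.sqrt (1 - 2*x))^(2*n - 5) := by
    induction n, hn using Nat.le_induction with
    | base =>
      intro x hx
      have h3 : iteratedDeriv 3 H0 = deriv (deriv (deriv H0)) := by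
        rw [show (3:ℕ) = 2+1 from rfl, iteratedDeriv_succ,
          show (2:ℕ) = 1+1 from rfl, iteratedDeriv_succ, iteratedDeriv_one]
      rw [h3, D3 hx]
      norm_num [Nat.doubleFactorial]
    | succ n hn ih =>
      intro x hx
      rw [iteratedDeriv_succ]
      have h : iteratedDeriv n H0 =ᶠ[nhds x]
          fun y => (Nat.doubleFactorial (2*n - 7) : ℝ) / (Real.sqrt (1 - 2*y))^(2*n - 5) := by
        filter_upwards [Iio_mem_nhds hx] with z hz using ih z hz
      rw [h.deriv_eq]
      obtain ⟨k, rfl⟩ : ∃ k, n = k + 3 := ⟨n - 3, by omega⟩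
      simp only [show 2*(k+3) - 7 = 2*k - 1 from by omega,
        show 2*(k+3) - 5 = 2*k + 1 from by omega,
        show 2*(k+3+1) - 7 = 2*k + 1 from by omega,
        show 2*(k+3+1) - 5 = 2*k + 3 from by omega]
      exact (step k hx).deriv
  refine ⟨key, ?_⟩
  have h0 := key 0 (by norm_num)
  rw [h0]
  norm_num
end

section
/- Let T(x) = √(1-2x) and H₀(x) = 1/40 − T²/12 + T⁴/8 − T⁵/15 for x < 1/2. Then H₀ satisfies the differential equation x·H₀''(x) − (3/2)·H₀'(x) − (1/4)·(H₀''(x))² = 0. -/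
noncomputable def H0d : ℝ → ℝ := fun x =>
  1/6 - (Real.sqrt (1 - 2*x))^2/2 + (Real.sqrt (1 - 2*x))^3/3

lemma sqrt_hasDeriv {x : ℝ} (hx : x < 1/2) :
    HasDerivAt (fun x => Real.sqrt (1 - 2*x)) (-(Real.sqrt (1 - 2*x))⁻¹) x := by
  have h1 : (0:ℝ) < 1 - 2*x := by linarith
  have hs : HasDerivAt Real.sqrt (1 / (2 * Real.sqrt (1 - 2*x))) (1 - 2*x) :=
    Real.hasDerivAt_sqrt (ne_of_gt h1)
  have hi : HasDerivAt (fun x : ℝ => 1 - 2*x) (-2) x := by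
    simpa using ((hasDerivAt_id x).const_mul (2:ℝ)).const_sub 1
  have h := hs.comp x hi
  have hS : 0 < Real.sqrt (1 - 2*x) := Real.sqrt_pos.mpr h1
  refine h.congr_deriv (Eq.symm ?_)
  field_simp

lemma H0_hasDeriv {x : ℝ} (hx : x < 1/2) : HasDerivAt H0 (H0d x) x := by
  have h1 : (0:ℝ) < 1 - 2*x := by linarith
  have hS : 0 < Real.sqrt (1 - 2*x) := Real.sqrt_pos.mpr h1
  have hT := sqrt_hasDeriv hx
  have h := ((((hT.pow 2).div_const 12).const_sub (1/40)).add
    ((hT.pow 4).div_const 8)).sub ((hT.pow 5).div_const 15)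
  have hT2 : (Real.sqrt (1 - 2*x))^2 = 1 - 2*x := Real.sq_sqrt h1.le
  refine h.congr_deriv (Eq.symm ?_)
  simp only [H0d]
  field_simp
  linear_combination

lemma H0d_hasDeriv {x : ℝ} (hx : x < 1/2) :
    HasDerivAt H0d (1 - Real.sqrt (1 - 2*x)) x := by
  have h1 : (0:ℝ) < 1 - 2*x := by linarith
  have hS : 0 < Real.sqrt (1 - 2*x) := Real.sqrt_pos.mpr h1
  have hT := sqrt_hasDeriv hx
  have h := (((hT.pow 2).div_const 2).const_sub (1/6)).add ((hT.pow 3).div_const 3)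
  have hT2 : (Real.sqrt (1 - 2*x))^2 = 1 - 2*x := Real.sq_sqrt h1.le
  refine h.congr_deriv (Eq.symm ?_)
  field_simp
  linear_combination

theorem stmt3 (x : ℝ) (hx : x < 1/2) :
    x * iteratedDeriv 2 H0 x - (3/2) * deriv H0 x
      - (1/4) * (iteratedDeriv 2 H0 x)^2 = 0 := by
  have h1 : (0:ℝ) < 1 - 2*x := by linarith
  have heq : deriv H0 =ᶠ[nhds x] H0d := by
    filter_upwards [Iio_mem_nhds hx] with y hy using (H0_hasDeriv hy).deriv
  have hd1 : deriv H0 x = H0d x := (H0_hasDeriv hx).deriv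
  have hd2 : iteratedDeriv 2 H0 x = 1 - Real.sqrt (1 - 2*x) := by
    rw [iteratedDeriv_succ, iteratedDeriv_one, heq.deriv_eq]
    exact (H0d_hasDeriv hx).deriv
  have hT2 : (Real.sqrt (1 - 2*x))^2 = 1 - 2*x := Real.sq_sqrt h1.le
  rw [hd1, hd2]
  simp only [H0d]
  linear_combination (1/2 - Real.sqrt (1-2*x)/2) * hT2
end

section
/- With the recursion of the previous context defining a_{g,n}, one has a_{0,n} = (2n-7)!! for all n ≥ 3, where (−1)!! = 1!! = 1. -/
open Finset

private lemma lemA10 : ∀ j : ℕ, 2^j * Nat.doubleFactorial (2*j-1) * j.factorial = (2*j).factorial := by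
  intro j
  induction j with
  | zero => simp [Nat.doubleFactorial]
  | succ k ih =>
    have h1 : 2*(k+1)-1 = (2*k-1) + 2 ∨ k = 0 := by omega
    rcases h1 with h1 | rfl
    · rw [h1, Nat.doubleFactorial_add_two]
      have h2 : 2*(k+1) = 2*k + 1 + 1 := by ring
      rw [h2, Nat.factorial_succ, Nat.factorial_succ, Nat.factorial_succ]
      have h3 : 2*k-1+2 = 2*k+1 := by omega
      rw [h3]
      calc 2^(k+1) * ((2*k+1) * Nat.doubleFactorial (2*k-1)) * ((k+1) * k.factorial)
          = ((2*k+1+1) * ((2*k+1))) * (2^k * Nat.doubleFactorial (2*k-1) * k.factorial) := by ring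
        _ = (2*k+1+1) * ((2*k+1) * (2*k).factorial) := by rw [ih]; ring
    · decide

private lemma lemA10' : ∀ j : ℕ, 2^j * Nat.doubleFactorial (2*j-1) = (j+1).factorial * catalan j := by
  intro j
  have h := lemA10 j
  have hc : (j+1).factorial * catalan j * j.factorial = (2*j).factorial := by
    have h1 : (j+1) * catalan j = Nat.centralBinom j := succ_mul_catalan_eq_centralBinom j
    have h2 : Nat.centralBinom j * j.factorial * j.factorial = (2*j).factorial := by
      have := Nat.choose_mul_factorial_mul_factorial (show j ≤ 2*j by omega)
      simpa [Nat.centralBinom, two_mul, Nat.sub_eq_iff_eq_add] using this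
    calc (j+1).factorial * catalan j * j.factorial
        = ((j+1) * catalan j) * j.factorial * j.factorial := by
          rw [Nat.factorial_succ]; ring
      _ = (2*j).factorial := by rw [h1]; exact h2
  exact Nat.eq_of_mul_eq_mul_right (Nat.factorial_pos j) (h.trans hc.symm)

private lemma lemB10 (k : ℕ) : ∑ j ∈ range (k+1),
    (k+2).choose (j+1) * Nat.doubleFactorial (2*j-1) * Nat.doubleFactorial (2*(k-j)-1)
    = 2 * Nat.doubleFactorial (2*k+1) := by
  have key : 2^k * ∑ j ∈ range (k+1),
      (k+2).choose (j+1) * Nat.doubleFactorial (2*j-1) * Nat.doubleFactorial (2*(k-j)-1)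
      = 2^k * (2 * Nat.doubleFactorial (2*k+1)) := by
    rw [Finset.mul_sum]
    have hterm : ∀ j ∈ range (k+1),
        2^k * ((k+2).choose (j+1) * Nat.doubleFactorial (2*j-1) * Nat.doubleFactorial (2*(k-j)-1))
        = (k+2).factorial * (catalan j * catalan (k-j)) := by
      intro j hj
      rw [Finset.mem_range] at hj
      have hjk : j ≤ k := by omega
      have h2k : 2^k = 2^j * 2^(k-j) := by rw [← pow_add]; congr 1; omega
      rw [h2k]
      calc 2^j * 2^(k-j) * ((k+2).choose (j+1) * Nat.doubleFactorial (2*j-1) * Nat.doubleFactorial (2*(k-j)-1))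
          = (k+2).choose (j+1) * (2^j * Nat.doubleFactorial (2*j-1)) * (2^(k-j) * Nat.doubleFactorial (2*(k-j)-1)) := by ring
        _ = (k+2).choose (j+1) * ((j+1).factorial * catalan j) * ((k-j+1).factorial * catalan (k-j)) := by
            rw [lemA10' j, lemA10' (k-j)]
        _ = ((k+2).choose (j+1) * (j+1).factorial * (k+2-(j+1)).factorial) * (catalan j * catalan (k-j)) := by
            have : k+2-(j+1) = k-j+1 := by omega
            rw [this]; ring
        _ = (k+2).factorial * (catalan j * catalan (k-j)) := by
            rw [Nat.choose_mul_factorial_mul_factorial (show j+1 ≤ k+2 by omega)]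
    rw [Finset.sum_congr rfl hterm, ← Finset.mul_sum]
    have hcat : ∑ j ∈ range (k+1), catalan j * catalan (k-j) = catalan (k+1) := by
      rw [catalan_succ k, ← Fin.sum_univ_eq_sum_range]
    rw [hcat]
    have := lemA10' (k+1)
    have h1 : 2*(k+1)-1 = 2*k+1 := by omega
    rw [h1] at this
    calc (k+2).factorial * catalan (k+1) = 2^(k+1) * Nat.doubleFactorial (2*k+1) := this.symm
      _ = 2^k * (2 * Nat.doubleFactorial (2*k+1)) := by ring
  exact Nat.eq_of_mul_eq_mul_left (by positivity) key

private lemma lemC10 (n : ℕ) (hn : 5 ≤ n) : ∑ i ∈ range (n+4),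
    (if 4 ≤ i ∧ i ≤ n-1 then (n-1).choose (i-2) * Nat.doubleFactorial (2*i-7) * Nat.doubleFactorial (2*(n+3-i)-7) else 0)
    = 2*(n-4)*Nat.doubleFactorial (2*n-7) := by
  set D := Nat.doubleFactorial (2*n-7) with hD
  set F : ℕ → ℕ := fun j => (n-1).choose (j+1) * Nat.doubleFactorial (2*j-1) * Nat.doubleFactorial (2*(n-3-j)-1) with hF
  have hB : ∑ j ∈ range (n-2), F j = 2 * Nat.doubleFactorial (2*(n-3)+1) := by
    have := lemB10 (n-3)
    have h1 : n-3+2 = n-1 := by omega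
    have h2 : n-3+1 = n-2 := by omega
    rw [h1, h2] at this
    exact this
  have hLHS : ∑ i ∈ range (n+4),
      (if 4 ≤ i ∧ i ≤ n-1 then (n-1).choose (i-2) * Nat.doubleFactorial (2*i-7) * Nat.doubleFactorial (2*(n+3-i)-7) else 0)
      = ∑ j ∈ range (n-4), F (j+1) := by
    rw [← Finset.sum_filter]
    have hfil : (range (n+4)).filter (fun i => 4 ≤ i ∧ i ≤ n-1) = Finset.Ico 4 n := by
      ext i
      simp only [Finset.mem_filter, Finset.mem_range, Finset.mem_Ico]
      omega
    rw [hfil, Finset.sum_Ico_eq_sum_range]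
    apply Finset.sum_congr rfl
    intro j hj
    rw [Finset.mem_range] at hj
    simp only [hF]
    have e1 : 4 + j - 2 = j + 1 + 1 := by omega
    have e2 : 2*(4+j)-7 = 2*(j+1)-1 := by omega
    have e3 : 2*(n+3-(4+j))-7 = 2*(n-3-(j+1))-1 := by omega
    rw [e1, e2, e3]
  rw [hLHS]
  have hsplit : ∑ j ∈ range (n-2), F j = (∑ j ∈ range (n-4), F (j+1)) + F (n-3) + F 0 := by
    have h1 : n-2 = (n-3)+1 := by omega
    have h2 : n-3 = (n-4)+1 := by omega
    rw [h1, Finset.sum_range_succ, h2, Finset.sum_range_succ', ← h2]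
    ring
  have hF0 : F 0 = (n-1) * D := by
    simp only [hF, hD]
    have e1 : 2*0-1 = 0 := by omega
    have e2 : 2*(n-3-0)-1 = 2*n-7 := by omega
    rw [e1, e2]
    simp [Nat.doubleFactorial]
  have hFn3 : F (n-3) = (n-1) * D := by
    simp only [hF, hD]
    have e1 : n-3+1 = n-2 := by omega
    have e2 : 2*(n-3)-1 = 2*n-7 := by omega
    have e3 : 2*(n-3-(n-3))-1 = 0 := by omega
    rw [e1, e2, e3]
    have e4 : (n-1).choose (n-2) = n-1 := by
      have := Nat.choose_symm (show 1 ≤ n-1 by omega)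
      have e5 : n-1-1 = n-2 := by omega
      rw [e5] at this
      rw [this, Nat.choose_one_right]
    rw [e4]
    simp [Nat.doubleFactorial]
  have hrhs : 2 * Nat.doubleFactorial (2*(n-3)+1) = 2*(2*n-5)*D := by
    have e1 : 2*(n-3)+1 = (2*n-7)+2 := by omega
    rw [e1, Nat.doubleFactorial_add_two, hD]
    have e2 : 2*n-7+2 = 2*n-5 := by omega
    rw [e2]; ring
  rw [hsplit, hF0, hFn3, hrhs] at hB
  have hco : 2*(2*n-5)*D = 2*(n-4)*D + ((n-1)*D + (n-1)*D) := by
    have h9 : 2*(2*n-5) = 2*(n-4) + ((n-1)+(n-1)) := by omega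
    rw [h9, Nat.add_mul, Nat.add_mul]
  rw [hco] at hB
  omega

theorem stmt10 (a : ℕ → ℕ → ℚ)
    (h01 : a 0 1 = 0) (h02 : a 0 2 = 0) (h03 : a 0 3 = 1) (h04 : a 0 4 = 1)
    (hrec : ∀ g n : ℕ, 1 ≤ n → 0 < 2*(g:ℤ) - 2 + n →
      (g, n) ≠ (0, 3) → (g, n) ≠ (0, 4) →
      a g n =
        (1/2) * (∑ p ∈ Finset.HasAntidiagonal.antidiagonal g, ∑ q ∈ Finset.HasAntidiagonal.antidiagonal (n+3),
            if 2 ≤ q.1 ∧ 2 ≤ q.2 ∧ (p.1, q.1) ≠ (0, 3) ∧ (p.2, q.2) ≠ (0, 3) then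
              (Nat.choose (n-1) (q.1 - 2) : ℚ) * a p.1 q.1 * a p.2 q.2
            else 0) / (4*(g:ℚ) - 4 + n)
        + (1/12) * (if g = 0 then 0 else a (g-1) (n+3)) / (4*(g:ℚ) - 4 + n)) :
    ∀ n : ℕ, 3 ≤ n → a 0 n = (Nat.doubleFactorial (2*n - 7) : ℚ) := by
  intro n
  induction n using Nat.strong_induction_on with
  | _ n IH =>
  intro hn
  by_cases h3 : n = 3
  · subst h3; simpa using h03
  by_cases h4 : n = 4
  · subst h4; simpa using h04
  have hn5 : 5 ≤ n := by omega
  have h := hrec 0 n (by omega) (by push_cast; omega)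
    (by simp [Prod.ext_iff]; omega) (by simp [Prod.ext_iff]; omega)
  simp only [Finset.Nat.antidiagonal_zero, Finset.sum_singleton, if_true, eq_self_iff_true,
    mul_zero, zero_div, add_zero,
    Finset.Nat.sum_antidiagonal_eq_sum_range_succ_mk] at h
  have hsum : ∑ x ∈ range (n+3).succ,
      (if 2 ≤ x ∧ 2 ≤ n+3-x ∧ ((0:ℕ), x) ≠ ((0:ℕ), 3) ∧ ((0:ℕ), n+3-x) ≠ ((0:ℕ), 3) then
        (Nat.choose (n-1) (x - 2) : ℚ) * a 0 x * a 0 (n+3-x)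
      else 0)
      = ((2*(n-4)*Nat.doubleFactorial (2*n-7) : ℕ) : ℚ) := by
    rw [← lemC10 n hn5, Nat.cast_sum]
    have hrange : (n+3).succ = n+4 := by omega
    rw [hrange]
    apply Finset.sum_congr rfl
    intro k hk
    rw [Finset.mem_range] at hk
    by_cases hmain : 4 ≤ k ∧ k ≤ n-1
    · have hC : 2 ≤ k ∧ 2 ≤ n+3-k ∧ ((0:ℕ), k) ≠ ((0:ℕ), 3) ∧ ((0:ℕ), n+3-k) ≠ ((0:ℕ), 3) := by
        refine ⟨by omega, by omega, ?_, ?_⟩ <;> · simp [Prod.ext_iff]; omega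
      rw [if_pos hC, if_pos hmain]
      have ha1 : a 0 k = (Nat.doubleFactorial (2*k-7) : ℚ) := IH k (by omega) (by omega)
      have ha2 : a 0 (n+3-k) = (Nat.doubleFactorial (2*(n+3-k)-7) : ℚ) :=
        IH (n+3-k) (by omega) (by omega)
      rw [ha1, ha2]
      push_cast
      ring
    · rw [if_neg hmain, Nat.cast_zero]
      by_cases hC : 2 ≤ k ∧ 2 ≤ n+3-k ∧ ((0:ℕ), k) ≠ ((0:ℕ), 3) ∧ ((0:ℕ), n+3-k) ≠ ((0:ℕ), 3)
      · have hk3 : k ≠ 3 := by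
          intro hh; exact hC.2.2.1 (by rw [hh])
        have hk3' : n+3-k ≠ 3 := by
          intro hh; exact hC.2.2.2 (by rw [hh])
        have hor : k = 2 ∨ n+3-k = 2 := by omega
        rw [if_pos hC]
        rcases hor with h2 | h2
        · rw [h2, h02]; ring
        · rw [h2, h02]; ring
      · rw [if_neg hC]
  rw [hsum] at h
  have hle : (4:ℕ) ≤ n := by omega
  have hcast : ((2*(n-4)*Nat.doubleFactorial (2*n-7) : ℕ) : ℚ)
      = 2*((n:ℚ)-4)*(Nat.doubleFactorial (2*n-7) : ℚ) := by
    push_cast [Nat.cast_sub hle]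
    ring
  rw [hcast] at h
  rw [h]
  have hne : (n:ℚ) - 4 ≠ 0 := by
    have h5 : (4:ℚ) < (n:ℚ) := by exact_mod_cast (by omega : 4 < n)
    intro hc; nlinarith
  have hden : (4*((0:ℕ):ℚ) - 4 + (n:ℚ)) = (n:ℚ) - 4 := by push_cast; ring
  rw [hden]
  field_simp
end

section
/- For each fixed g ≥ 2, with κ_g a positive constant, the numbers Vol Q_{g,n} := 2^{2g+1+n}·π^{6g-6+2n}·((4g-4+n)!/(6g-7+2n)!)·Σ_{j=0}^{g} b_{g,j}·((5g-5-j)/2)_n (where b_{g,j} ≥ 0 are fixed reals with b_{g,0} > 0 and (c)_n = c(c+1)⋯(c+n-1) is the Pochhammer symbol) satisfy Vol Q_{g,n} · 2^n / (n^{g/2}·π^{2n}) → κ_g as n → ∞, where κ_g = 2^{2g+1}·π^{6g-6}·b_{g,0}·lim_{n→∞} 2^{2n}·(4g-4+n)!·((5g-5)/2)_n/(n^{g/2}·(6g-7+2n)!). -/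
open Filter

section Aux
open Real Finset

lemma stirling_ratio {n : ℕ} (hn : 1 ≤ n) :
    Stirling.stirlingSeq n ^ 2 / Stirling.stirlingSeq (2 * n)
      = 2 ^ (2 * n) * ((n.factorial : ℝ))^2 / (((2 * n).factorial : ℝ) * Real.sqrt n) := by
  have hn0 : (0:ℝ) < n := by exact_mod_cast hn
  have he : (0:ℝ) < Real.exp 1 := Real.exp_pos 1
  have hs2n : Real.sqrt (2 * ((2*n : ℕ):ℝ)) = 2 * Real.sqrt n := by
    push_cast
    rw [show (2 : ℝ) * (2 * n) = 2^2 * n by ring, Real.sqrt_mul (by positivity), Real.sqrt_sq (by norm_num)]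
  have hsq : Real.sqrt (2 * (n:ℝ)) ^ 2 = 2 * n := Real.sq_sqrt (by positivity)
  have hpow : (((2*n:ℕ):ℝ) / Real.exp 1) ^ (2*n) = 2^(2*n) * ((n:ℝ)/Real.exp 1)^(2*n) := by
    push_cast
    rw [← mul_pow]
    congr 1
    field_simp
  have hsn : Real.sqrt (n:ℝ) ≠ 0 := by positivity
  have hss : Real.sqrt (n:ℝ) * Real.sqrt (n:ℝ) = (n:ℝ) := Real.mul_self_sqrt hn0.le
  have h1 : ((n:ℝ)/Real.exp 1) ^ (2*n) ≠ 0 := by positivity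
  have hf1 : ((2*n).factorial : ℝ) ≠ 0 := by positivity
  unfold Stirling.stirlingSeq
  rw [div_pow, mul_pow, hsq, ← pow_mul, Nat.mul_comm n 2, hpow]
  rw [div_div_div_eq]
  field_simp
  ring_nf
  rw [show ((n*2 : ℕ):ℝ) * 2 = 2^2 * n by push_cast; ring, Real.sqrt_mul (by positivity), Real.sqrt_sq (by norm_num), mul_assoc, hss]
  ring

lemma poch_eq_prod (x : ℝ) (n : ℕ) :
    (ascPochhammer ℝ n).eval x = ∏ k ∈ Finset.range n, (x + k) := by
  induction n with
  | zero => simp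
  | succ n ih => rw [ascPochhammer_succ_eval, ih, Finset.prod_range_succ]

lemma fact_shift (A n : ℕ) :
    ((A + n).factorial : ℝ) = (n.factorial : ℝ) * ∏ k ∈ Finset.range A, ((n:ℝ) + k + 1) := by
  induction A with
  | zero => simp
  | succ A ih =>
    rw [Finset.prod_range_succ, show A + 1 + n = (A + n) + 1 by ring, Nat.factorial_succ, ← mul_assoc, ← ih]
    push_cast
    ring

lemma tendsto_shift (c : ℝ) : Tendsto (fun n : ℕ => ((n:ℝ) + c) / n) atTop (nhds 1) := by
  have h : Tendsto (fun n : ℕ => 1 + c * (1 / (n:ℝ))) atTop (nhds (1 + c * 0)) :=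
    tendsto_const_nhds.add (tendsto_const_nhds.mul tendsto_one_div_atTop_nhds_zero_nat)
  rw [mul_zero, add_zero] at h
  refine h.congr' ?_
  filter_upwards [eventually_ge_atTop 1] with n hn
  have hn0 : (n:ℝ) ≠ 0 := by positivity
  field_simp

/-- `(A+n)! / (n! * n^A) → 1`. -/
lemma tendsto_fact_ratio (A : ℕ) :
    Tendsto (fun n : ℕ => ((A + n).factorial : ℝ) / ((n.factorial : ℝ) * (n:ℝ) ^ A))
      atTop (nhds 1) := by
  have h : Tendsto (fun n : ℕ => ∏ k ∈ Finset.range A, (((n:ℝ) + k + 1) / n)) atTop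
      (nhds (∏ k ∈ Finset.range A, 1)) := by
    refine tendsto_finset_prod _ fun k _ => ?_
    have := tendsto_shift ((k:ℝ) + 1)
    simpa [add_assoc] using this
  rw [Finset.prod_const_one] at h
  refine h.congr' ?_
  filter_upwards [eventually_ge_atTop 1] with n hn
  have hn0 : (n:ℝ) ≠ 0 := by positivity
  rw [fact_shift, Finset.prod_div_distrib, Finset.prod_const, Finset.card_range]
  have hfn : (n.factorial : ℝ) ≠ 0 := by positivity
  field_simp

/-- `(x)_n / (n! * n^(x-1)) → 1/Γ(x)`. -/
lemma tendsto_poch_ratio {x : ℝ} (hx : 0 < x) :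
    Tendsto (fun n : ℕ => (ascPochhammer ℝ n).eval x / ((n.factorial : ℝ) * (n:ℝ) ^ (x - 1)))
      atTop (nhds (1 / Real.Gamma x)) := by
  have hG : Real.Gamma x ≠ 0 := (Real.Gamma_pos_of_pos hx).ne'
  have h1 : Tendsto (fun n : ℕ => (n:ℝ) / (x + n)) atTop (nhds 1) := by
    have := tendsto_natCast_div_add_atTop (𝕜 := ℝ) x
    refine this.congr fun n => by rw [add_comm]
  have h := h1.div (Real.GammaSeq_tendsto_Gamma x) hG
  refine h.congr' ?_
  filter_upwards [eventually_ge_atTop 1] with n hn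
  have hn0 : (0:ℝ) < n := by exact_mod_cast hn
  have hxn : x + (n:ℝ) ≠ 0 := by positivity
  have hfn : (n.factorial : ℝ) ≠ 0 := by positivity
  have hprod : ∀ m : ℕ, (0:ℝ) < ∏ j ∈ Finset.range m, (x + j) :=
    fun m => Finset.prod_pos fun j _ => by positivity
  unfold Real.GammaSeq
  simp only [Pi.div_apply]
  rw [Finset.prod_range_succ, ← poch_eq_prod]
  have hrx : (n:ℝ) ^ (x - 1 + 1) = (n:ℝ) ^ (x - 1) * n := Real.rpow_add_one (ne_of_gt hn0) (x - 1)
  rw [sub_add_cancel] at hrx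
  have hP : (ascPochhammer ℝ n).eval x ≠ 0 := by
    rw [poch_eq_prod]; exact (hprod n).ne'
  have hr1 : (n:ℝ) ^ (x-1) ≠ 0 := by positivity
  rw [div_div_div_eq]
  rw [hrx]
  field_simp

lemma key (A B : ℕ) (x q : ℝ) (hx : 0 < x) (hq : q = A + x - B - 1/2) :
    Tendsto (fun n : ℕ =>
        2^(2*n) * ((A + n).factorial : ℝ) * (ascPochhammer ℝ n).eval x
          / ((n:ℝ) ^ q * ((B + 2*n).factorial : ℝ)))
      atTop (nhds (Real.sqrt Real.pi / (Real.Gamma x * 2^B))) := by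
  have hG : (0:ℝ) < Real.Gamma x := Real.Gamma_pos_of_pos hx
  have hsp : Real.sqrt Real.pi ≠ 0 := by positivity
  have h2 : Tendsto (fun n : ℕ => 2*n) atTop atTop :=
    tendsto_atTop_mono (fun n => by simp only [id_eq]; omega) tendsto_id
  have hu : Tendsto (fun n : ℕ => Stirling.stirlingSeq n ^ 2 / Stirling.stirlingSeq (2*n))
      atTop (nhds (Real.sqrt Real.pi)) := by
    have h := (Stirling.tendsto_stirlingSeq_sqrt_pi.pow 2).div
      (Stirling.tendsto_stirlingSeq_sqrt_pi.comp h2) hsp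
    have hval : (Real.sqrt Real.pi)^2 / Real.sqrt Real.pi = Real.sqrt Real.pi := by
      rw [sq, mul_div_assoc, div_self hsp, mul_one]
    rw [hval] at h
    exact h
  have hv := tendsto_fact_ratio A
  have hw : Tendsto (fun n : ℕ => ((B + 2*n).factorial : ℝ)
      / (((2*n).factorial : ℝ) * ((2*n : ℕ):ℝ) ^ B) * 2^B) atTop (nhds (1 * 2^B)) :=
    ((tendsto_fact_ratio B).comp h2).mul_const _
  have hp := tendsto_poch_ratio hx
  have hlim := ((hu.mul hv).mul hp).div hw (by positivity)
  have hval : Real.sqrt Real.pi * 1 * (1 / Real.Gamma x) / (1 * 2^B)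
      = Real.sqrt Real.pi / (Real.Gamma x * 2^B) := by
    field_simp
  rw [hval] at hlim
  refine hlim.congr' ?_
  filter_upwards [eventually_ge_atTop 1] with n hn
  have hn0 : (0:ℝ) < n := by exact_mod_cast hn
  have hnq : (n:ℝ)^q * (n:ℝ)^(B:ℕ) = Real.sqrt n * ((n:ℝ)^(A:ℕ) * (n:ℝ)^(x-1)) := by
    rw [← Real.rpow_natCast (n:ℝ) B, ← Real.rpow_natCast (n:ℝ) A, Real.sqrt_eq_rpow,
      ← Real.rpow_add hn0, ← Real.rpow_add hn0, ← Real.rpow_add hn0]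
    congr 1
    rw [hq]; ring
  have hF1 : (n.factorial : ℝ) ≠ 0 := by positivity
  have hF2 : (((2*n).factorial : ℕ) : ℝ) ≠ 0 := by positivity
  have hFB : (((B + 2*n).factorial : ℕ) : ℝ) ≠ 0 := by positivity
  have hsn : Real.sqrt (n:ℝ) ≠ 0 := by positivity
  have hnA : (n:ℝ)^(A:ℕ) ≠ 0 := by positivity
  have hnx : (n:ℝ)^(x-1) ≠ 0 := by positivity
  have hnq' : (n:ℝ)^q ≠ 0 := by positivity
  have hP : (0:ℝ) < (ascPochhammer ℝ n).eval x := by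
    rw [poch_eq_prod]; exact Finset.prod_pos fun k _ => by positivity
  simp only [Pi.div_apply]
  rw [stirling_ratio hn]
  field_simp
  push_cast
  rw [mul_pow]
  linear_combination (2^B : ℝ) * hnq

end Aux

section Main
open Real Finset

theorem stmt17 (g : ℕ) (hg : 2 ≤ g) (b : ℕ → ℝ) (hb : ∀ j, 0 ≤ b j) (hb0 : 0 < b 0) :
    ∃ L : ℝ, 0 < L ∧
      Tendsto (fun n : ℕ =>
          2^(2*n) * (Nat.factorial (4*g - 4 + n) : ℝ)
            * (ascPochhammer ℝ n).eval ((5*(g:ℝ) - 5)/2)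
            / ((n:ℝ) ^ ((g:ℝ)/2) * (Nat.factorial (6*g - 7 + 2*n) : ℝ)))
        atTop (nhds L) ∧
      Tendsto (fun n : ℕ =>
          (2^(2*g + 1 + n) * Real.pi^(6*g - 6 + 2*n)
              * ((Nat.factorial (4*g - 4 + n) : ℝ) / (Nat.factorial (6*g - 7 + 2*n) : ℝ))
              * ∑ j ∈ Finset.range (g+1),
                  b j * (ascPochhammer ℝ n).eval ((5*(g:ℝ) - 5 - (j:ℝ))/2))
            * 2^n / ((n:ℝ) ^ ((g:ℝ)/2) * Real.pi^(2*n)))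
        atTop (nhds (2^(2*g + 1) * Real.pi^(6*g - 6) * b 0 * L)) := by
  have hg' : (2:ℝ) ≤ (g:ℝ) := by exact_mod_cast hg
  have hA : ((4*g - 4 : ℕ) : ℝ) = 4*(g:ℝ) - 4 := by
    rw [Nat.cast_sub (by omega : 4 ≤ 4*g)]; push_cast; ring
  have hB : ((6*g - 7 : ℕ) : ℝ) = 6*(g:ℝ) - 7 := by
    rw [Nat.cast_sub (by omega : 7 ≤ 6*g)]; push_cast; ring
  set x0 : ℝ := (5*(g:ℝ) - 5)/2 with hx0def
  have hx0 : 0 < x0 := by rw [hx0def]; linarith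
  set L : ℝ := Real.sqrt Real.pi / (Real.Gamma x0 * 2^(6*g - 7)) with hLdef
  have hL : 0 < L := by
    have := Real.Gamma_pos_of_pos hx0
    rw [hLdef]; positivity
  have T1 : Tendsto (fun n : ℕ =>
      2^(2*n) * (Nat.factorial (4*g - 4 + n) : ℝ)
        * (ascPochhammer ℝ n).eval x0
        / ((n:ℝ) ^ ((g:ℝ)/2) * (Nat.factorial (6*g - 7 + 2*n) : ℝ)))
      atTop (nhds L) :=
    key (4*g-4) (6*g-7) x0 ((g:ℝ)/2) hx0 (by rw [hA, hB, hx0def]; ring)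
  refine ⟨L, hL, T1, ?_⟩
  set C : ℝ := 2^(2*g + 1) * Real.pi^(6*g - 6) with hCdef
  have hC : 0 < C := by rw [hCdef]; positivity
  -- termwise limits
  have h_each : ∀ j ∈ Finset.range (g+1),
      Tendsto (fun n : ℕ => b j * (C *
        (2^(2*n) * (Nat.factorial (4*g - 4 + n) : ℝ)
          * (ascPochhammer ℝ n).eval ((5*(g:ℝ) - 5 - (j:ℝ))/2)
          / ((n:ℝ) ^ ((g:ℝ)/2) * (Nat.factorial (6*g - 7 + 2*n) : ℝ)))))
      atTop (nhds (if j = 0 then b 0 * (C * L) else 0)) := by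
    intro j hj
    have hjg : j ≤ g := by simpa [Nat.lt_succ_iff] using hj
    rcases Nat.eq_zero_or_pos j with rfl | hjpos
    · simp only [if_pos rfl, Nat.cast_zero, sub_zero]
      exact (T1.const_mul C).const_mul (b 0)
    · rw [if_neg hjpos.ne']
      have hxj : 0 < (5*(g:ℝ) - 5 - (j:ℝ))/2 := by
        have : (j:ℝ) ≤ (g:ℝ) := by exact_mod_cast hjg
        have h1 : (1:ℝ) ≤ (j:ℝ) := by exact_mod_cast hjpos
        linarith
      have keyj := key (4*g-4) (6*g-7) ((5*(g:ℝ) - 5 - (j:ℝ))/2) ((g:ℝ)/2 - (j:ℝ)/2) hxj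
        (by rw [hA, hB]; ring)
      have hzero : Tendsto (fun n : ℕ => ((n:ℝ)) ^ (-((j:ℝ)/2))) atTop (nhds 0) :=
        (tendsto_rpow_neg_atTop (by positivity : (0:ℝ) < (j:ℝ)/2)).comp
          tendsto_natCast_atTop_atTop
      have hprod := keyj.mul hzero
      rw [mul_zero] at hprod
      have hprod2 := (hprod.const_mul C).const_mul (b j)
      rw [mul_zero, mul_zero] at hprod2
      refine hprod2.congr' ?_
      filter_upwards [eventually_ge_atTop 1] with n hn
      have hn0 : (0:ℝ) < n := by exact_mod_cast hn
      have hsplit : (n:ℝ) ^ ((g:ℝ)/2)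
          = (n:ℝ) ^ ((g:ℝ)/2 - (j:ℝ)/2) * (n:ℝ) ^ ((j:ℝ)/2) := by
        rw [← Real.rpow_add hn0]; ring_nf
      have hne1 : (n:ℝ) ^ ((g:ℝ)/2 - (j:ℝ)/2) ≠ 0 := by positivity
      have hne2 : (n:ℝ) ^ ((j:ℝ)/2) ≠ 0 := by positivity
      have hneF : ((Nat.factorial (6*g - 7 + 2*n) : ℕ) : ℝ) ≠ 0 := by positivity
      rw [hsplit, Real.rpow_neg hn0.le, ← div_eq_mul_inv, div_div]
      ring
  have hsum := tendsto_finset_sum (Finset.range (g+1)) h_each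
  rw [Finset.sum_ite_eq' (Finset.range (g+1)) 0 (fun _ => b 0 * (C * L))] at hsum
  rw [if_pos (Finset.mem_range.mpr (by omega))] at hsum
  have hval : b 0 * (C * L) = 2^(2*g + 1) * Real.pi^(6*g - 6) * b 0 * L := by
    rw [hCdef]; ring
  rw [hval] at hsum
  refine hsum.congr' ?_
  filter_upwards [eventually_ge_atTop 1] with n hn
  have hn0 : (0:ℝ) < n := by exact_mod_cast hn
  have hng : (n:ℝ) ^ ((g:ℝ)/2) ≠ 0 := by positivity
  have hneF : ((Nat.factorial (6*g - 7 + 2*n) : ℕ) : ℝ) ≠ 0 := by positivity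
  rw [eq_comm, Finset.mul_sum, Finset.sum_mul, Finset.sum_div]
  refine Finset.sum_congr rfl fun j hj => ?_
  rw [hCdef]
  field_simp
  ring

end Main
end
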